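/- Let k ≥ 1, let Ω be a real symmetric positive definite (k+1)×(k+1) matrix, let (M̄, Ȳ_0, …, Ȳ_k) be a KKT pair for (P) at Ω, and let Ω̄ be any real symmetric (k+1)×(k+1) matrix. Then there is at most one tuple of real symmetric (k+1)×(k+1) matrices (Ṁ, Ẏ_0, …, Ẏ_k) satisfying ∑_{i=0}^k Ẏ_i = Ω̄ and Ẏ_i (M̄ − C_i) = Ȳ_i Ṁ for every i = 0,…,k. (Uniqueness of the sensitivity linear system for the directional derivatives of the primal and dual solutions, asserted in Theorem 3 and Appendix C of the paper.) -/

import Mathlib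

open Matrix MeasureTheory

/-- The constraint matrices `C_0 = 0` and
`C_i = [[0, e_i/2], [e_iᵀ/2, -ylow]]` for `i = 1,…,k` of the primal SDP (P). -/
noncomputable def Cmat (k : ℕ) (ylow : ℝ) : Fin (k + 1) → Matrix (Fin (k + 1)) (Fin (k + 1)) ℝ :=
  Fin.cases 0 fun i : Fin k =>
    Matrix.of fun a b =>
      if a = Fin.last k ∧ b = Fin.last k then -ylow
      else if a = i.castSucc ∧ b = Fin.last k then 1 / 2
      else if a = Fin.last k ∧ b = i.castSucc then 1 / 2
      else 0

section SensAux

variable {n k : ℕ} {ylow : ℝ}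

private lemma vmv_mulVec (u v x : Fin n → ℝ) :
    Matrix.vecMulVec u v *ᵥ x = (v ⬝ᵥ x) • u := by
  funext a
  simp only [Matrix.mulVec, dotProduct, Matrix.vecMulVec_apply, Pi.smul_apply,
    smul_eq_mul, Finset.sum_mul]
  exact Finset.sum_congr rfl fun b _ => by ring

private lemma vmv_mul (u v : Fin n → ℝ) (D : Matrix (Fin n) (Fin n) ℝ) :
    Matrix.vecMulVec u v * D = Matrix.vecMulVec u (v ᵥ* D) := by
  ext a b
  simp only [Matrix.mul_apply, Matrix.vecMulVec_apply, Matrix.vecMul, dotProduct]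
  rw [Finset.mul_sum]
  exact Finset.sum_congr rfl fun c _ => by ring

private lemma vmv_trace (u v : Fin n → ℝ) :
    (Matrix.vecMulVec u v).trace = u ⬝ᵥ v := by
  simp [Matrix.trace, Matrix.diag, Matrix.vecMulVec_apply, dotProduct]

private lemma vmv_transpose (u v : Fin n → ℝ) :
    (Matrix.vecMulVec u v)ᵀ = Matrix.vecMulVec v u := by
  ext a b; simp [Matrix.vecMulVec_apply, mul_comm]

private lemma smul_vmv (c : ℝ) (u v : Fin n → ℝ) :
    c • Matrix.vecMulVec u v = Matrix.vecMulVec u (c • v) := by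
  ext a b; simp [Matrix.vecMulVec_apply]; ring

private lemma vmv_sub (u a b : Fin n → ℝ) :
    Matrix.vecMulVec u (a - b) = Matrix.vecMulVec u a - Matrix.vecMulVec u b := by
  ext x y; simp [Matrix.vecMulVec_apply, mul_sub]

private lemma symm_vecMul {S : Matrix (Fin n) (Fin n) ℝ} (hS : S.IsSymm) (x : Fin n → ℝ) :
    x ᵥ* S = S *ᵥ x := by
  conv_lhs => rw [← hS]
  exact Matrix.vecMul_transpose S x

private lemma psd_nonneg {P : Matrix (Fin n) (Fin n) ℝ} (hP : P.PosSemidef) (x : Fin n → ℝ) :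
    0 ≤ x ⬝ᵥ P *ᵥ x := by simpa using hP.dotProduct_mulVec_nonneg x

private lemma psd_zero {P : Matrix (Fin n) (Fin n) ℝ} (hP : P.PosSemidef) {x : Fin n → ℝ}
    (hx : x ⬝ᵥ P *ᵥ x = 0) : P *ᵥ x = 0 :=
  (hP.dotProduct_mulVec_zero_iff x).mp (by simpa using hx)

private lemma eq_of_forall_mulVec {A B : Matrix (Fin n) (Fin n) ℝ}
    (h : ∀ x, A *ᵥ x = B *ᵥ x) : A = B := by
  ext a b
  have := congrFun (h (Pi.single b 1)) a
  simpa using this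

private lemma sum_mulVec' {ι : Type*} (s : Finset ι) (A : ι → Matrix (Fin n) (Fin n) ℝ)
    (x : Fin n → ℝ) : (∑ j ∈ s, A j) *ᵥ x = ∑ j ∈ s, A j *ᵥ x := by
  funext a
  simp only [Matrix.mulVec, dotProduct, Finset.sum_apply, Matrix.sum_apply,
    Finset.sum_mul]
  exact Finset.sum_comm

private lemma Cmat_zero : Cmat k ylow 0 = 0 := by
  simp [Cmat]

private lemma Cmat_succ_eq (i : Fin k) :
    Cmat k ylow i.succ =
      Matrix.single i.castSucc (Fin.last k) (1 / 2 : ℝ) +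
        Matrix.single (Fin.last k) i.castSucc (1 / 2 : ℝ) +
        Matrix.single (Fin.last k) (Fin.last k) (-ylow) := by
  have hne : i.castSucc ≠ Fin.last k := (Fin.castSucc_lt_last i).ne
  rw [Cmat, Fin.cases_succ]
  ext a b
  simp only [Matrix.of_apply, Matrix.add_apply, Matrix.single]
  by_cases h1 : a = Fin.last k <;> by_cases h2 : b = Fin.last k <;>
    by_cases h3 : a = i.castSucc <;> by_cases h4 : b = i.castSucc <;>
    simp_all [eq_comm] <;> ring

private lemma mul_vmv (D : Matrix (Fin n) (Fin n) ℝ) (u v : Fin n → ℝ) :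
    D * Matrix.vecMulVec u v = Matrix.vecMulVec (D *ᵥ u) v := by
  ext a b
  simp only [Matrix.mul_apply, Matrix.vecMulVec_apply, Matrix.mulVec, dotProduct,
    Finset.sum_mul]
  exact Finset.sum_congr rfl fun c _ => by ring

private lemma vmv_zero_right (u : Fin n → ℝ) : Matrix.vecMulVec u (0 : Fin n → ℝ) = 0 := by
  ext a b; simp [Matrix.vecMulVec_apply]

private lemma vmv_zero_left (u : Fin n → ℝ) : Matrix.vecMulVec (0 : Fin n → ℝ) u = 0 := by
  ext a b; simp [Matrix.vecMulVec_apply]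

private lemma vmv_smul_left (c : ℝ) (u v : Fin n → ℝ) :
    Matrix.vecMulVec (c • u) v = c • Matrix.vecMulVec u v := by
  ext a b; simp [Matrix.vecMulVec_apply]; ring

private lemma dot_self_pos {u : Fin n → ℝ} (hu : u ≠ 0) : 0 < u ⬝ᵥ u := by
  have h1 : 0 ≤ u ⬝ᵥ u := Finset.sum_nonneg fun i _ => mul_self_nonneg _
  have h2 : u ⬝ᵥ u ≠ 0 := fun h => hu (dotProduct_self_eq_zero.mp h)
  exact h1.lt_of_ne' h2

private lemma Cmat_symm (j : Fin (k + 1)) : (Cmat k ylow j).IsSymm := by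
  induction j using Fin.cases with
  | zero => rw [Cmat_zero]; simp [Matrix.IsSymm]
  | succ i =>
    rw [Cmat_succ_eq]
    show _ = _
    ext a b
    simp only [Matrix.transpose_apply, Matrix.add_apply, Matrix.single, Matrix.of_apply]
    by_cases h1 : a = Fin.last k <;> by_cases h2 : b = Fin.last k <;>
      by_cases h3 : a = i.castSucc <;> by_cases h4 : b = i.castSucc <;>
      simp_all [eq_comm]

private lemma dot_update (x : Fin (k + 1) → ℝ) (i : Fin (k + 1)) (t : ℝ) :
    x ⬝ᵥ Function.update (0 : Fin (k + 1) → ℝ) i t = x i * t := by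
  simp [dotProduct, Function.update_apply, mul_ite]

private lemma Cmat_succ_quad (i : Fin k) (x : Fin (k + 1) → ℝ) :
    x ⬝ᵥ Cmat k ylow i.succ *ᵥ x =
      x i.castSucc * x (Fin.last k) - ylow * x (Fin.last k) ^ 2 := by
  rw [Cmat_succ_eq, Matrix.add_mulVec, Matrix.add_mulVec, dotProduct_add,
    dotProduct_add, Matrix.single_mulVec, Matrix.single_mulVec,
    Matrix.single_mulVec, dot_update, dot_update, dot_update]
  ring

private lemma Cmat_succ_mulVec_last (i : Fin k) (x : Fin (k + 1) → ℝ) :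
    (Cmat k ylow i.succ *ᵥ x) (Fin.last k) = x i.castSucc / 2 - ylow * x (Fin.last k) := by
  have hne : Fin.last k ≠ i.castSucc := (Fin.castSucc_lt_last i).ne'
  rw [Cmat_succ_eq, Matrix.add_mulVec, Matrix.add_mulVec, Matrix.single_mulVec,
    Matrix.single_mulVec, Matrix.single_mulVec]
  simp [Function.update_apply, hne]
  ring

private lemma ker_last_eq_zero {M : Matrix (Fin (k + 1)) (Fin (k + 1)) ℝ}
    (hfeas : ∀ j, (Cmat k ylow j - M).PosSemidef)
    {j : Fin (k + 1)} {v : Fin (k + 1) → ℝ} (hv : (M - Cmat k ylow j) *ᵥ v = 0)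
    (hvl : v (Fin.last k) = 0) : v = 0 := by
  have hMv : M *ᵥ v = Cmat k ylow j *ᵥ v := by
    rwa [Matrix.sub_mulVec, sub_eq_zero] at hv
  have hq : v ⬝ᵥ M *ᵥ v = 0 := by
    rw [hMv]
    induction j using Fin.cases with
    | zero => rw [Cmat_zero]; simp
    | succ i => rw [Cmat_succ_quad, hvl]; ring
  have hM0 : M *ᵥ v = 0 := by
    have h1 : v ⬝ᵥ (Cmat k ylow 0 - M) *ᵥ v = 0 := by
      rw [Cmat_zero, Matrix.sub_mulVec, dotProduct_sub, Matrix.zero_mulVec, hq]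
      simp
    have h2 := psd_zero (hfeas 0) h1
    rw [Cmat_zero, Matrix.sub_mulVec, Matrix.zero_mulVec, zero_sub, neg_eq_zero] at h2
    exact h2
  have hm : ∀ m : Fin k, v m.castSucc = 0 := by
    intro m
    have hq2 : v ⬝ᵥ (Cmat k ylow m.succ - M) *ᵥ v = 0 := by
      rw [Matrix.sub_mulVec, dotProduct_sub, hM0, dotProduct_zero,
        Cmat_succ_quad, hvl]
      ring
    have h3 := psd_zero (hfeas m.succ) hq2
    rw [Matrix.sub_mulVec, hM0, sub_zero] at h3
    have h4 := congrFun h3 (Fin.last k)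
    rw [Cmat_succ_mulVec_last, hvl] at h4
    simp at h4
    linarith
  funext a
  induction a using Fin.lastCases with
  | last => exact hvl
  | cast m => exact hm m

end SensAux

/-- A symmetric matrix `M` is feasible for (P) if `M - C_i ⪯ 0` for `i = 0,…,k`. -/
def PFeasible (k : ℕ) (ylow : ℝ) (M : Matrix (Fin (k + 1)) (Fin (k + 1)) ℝ) : Prop :=
  M.IsSymm ∧ ∀ i : Fin (k + 1), (Cmat k ylow i - M).PosSemidef


/-- A KKT pair for (P) at `Ω`: a feasible `M̄` together with positive semidefinite
multipliers `Ȳ_0, …, Ȳ_k` with `∑ Ȳ_i = Ω` and `Ȳ_i (M̄ - C_i) = 0` for all `i`. -/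
def KKTpair (k : ℕ) (ylow : ℝ) (Ω M : Matrix (Fin (k + 1)) (Fin (k + 1)) ℝ)
    (Y : Fin (k + 1) → Matrix (Fin (k + 1)) (Fin (k + 1)) ℝ) : Prop :=
  PFeasible k ylow M ∧ (∀ i, (Y i).PosSemidef) ∧ (∑ i, Y i) = Ω ∧
    ∀ i, Y i * (M - Cmat k ylow i) = 0

set_option maxHeartbeats 1000000

/-- **Uniqueness of the sensitivity linear system** (Theorem 3 / Appendix C of the paper).
Given a KKT pair `(M̄, Ȳ)` at a positive definite `Ω` and a symmetric direction `Ω̄`, there is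
at most one tuple of symmetric matrices `(Ṁ, Ẏ_0, …, Ẏ_k)` with `∑ᵢ Ẏ_i = Ω̄` and
`Ẏ_i (M̄ - C_i) = Ȳ_i Ṁ` for all `i`. -/
theorem sensitivity_system_unique (k : ℕ) (hk : 1 ≤ k) (ylow : ℝ)
    (Ω : Matrix (Fin (k + 1)) (Fin (k + 1)) ℝ) (hΩ : Ω.PosDef)
    (M : Matrix (Fin (k + 1)) (Fin (k + 1)) ℝ)
    (Y : Fin (k + 1) → Matrix (Fin (k + 1)) (Fin (k + 1)) ℝ)
    (hKKT : KKTpair k ylow Ω M Y)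
    (Ωb : Matrix (Fin (k + 1)) (Fin (k + 1)) ℝ) (hΩb : Ωb.IsSymm)
    (M₁ M₂ : Matrix (Fin (k + 1)) (Fin (k + 1)) ℝ)
    (Y₁ Y₂ : Fin (k + 1) → Matrix (Fin (k + 1)) (Fin (k + 1)) ℝ)
    (hM₁ : M₁.IsSymm) (hM₂ : M₂.IsSymm)
    (hY₁ : ∀ i, (Y₁ i).IsSymm) (hY₂ : ∀ i, (Y₂ i).IsSymm)
    (hsum₁ : (∑ i, Y₁ i) = Ωb) (hsum₂ : (∑ i, Y₂ i) = Ωb)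
    (heq₁ : ∀ i, Y₁ i * (M - Cmat k ylow i) = Y i * M₁)
    (heq₂ : ∀ i, Y₂ i * (M - Cmat k ylow i) = Y i * M₂) :
    M₁ = M₂ ∧ ∀ i, Y₁ i = Y₂ i := by
  classical
  obtain ⟨⟨hMsym, hfeas⟩, hYpsd, hYsum, hYM⟩ := hKKT
  have hCsym : ∀ j, (Cmat k ylow j).IsSymm := fun j => Cmat_symm j
  have hAsym : ∀ j, (M - Cmat k ylow j)ᵀ = M - Cmat k ylow j :=
    fun j => (hMsym.sub (hCsym j)).eq
  have hYsym : ∀ j, (Y j)ᵀ = Y j := by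
    intro j
    have h := (hYpsd j).1
    rwa [Matrix.IsHermitian, Matrix.conjTranspose_eq_transpose_of_trivial] at h
  have hAY : ∀ j, (M - Cmat k ylow j) * Y j = 0 := by
    intro j
    have h := congrArg Matrix.transpose (hYM j)
    rwa [Matrix.transpose_mul, hAsym j, hYsym j, Matrix.transpose_zero] at h
  have hDsym : (M₁ - M₂)ᵀ = M₁ - M₂ := (hM₁.sub hM₂).eq
  have hZsymm : ∀ j, (Y₁ j - Y₂ j)ᵀ = Y₁ j - Y₂ j := fun j => ((hY₁ j).sub (hY₂ j)).eq
  have hZsum : ∑ j, (Y₁ j - Y₂ j) = 0 := by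
    rw [Finset.sum_sub_distrib, hsum₁, hsum₂, sub_self]
  have hZA : ∀ j, (Y₁ j - Y₂ j) * (M - Cmat k ylow j) = Y j * (M₁ - M₂) := by
    intro j
    rw [Matrix.sub_mul, heq₁ j, heq₂ j, ← Matrix.mul_sub]
  have hAZ : ∀ j, (M - Cmat k ylow j) * (Y₁ j - Y₂ j) = (M₁ - M₂) * Y j := by
    intro j
    have h := congrArg Matrix.transpose (hZA j)
    rwa [Matrix.transpose_mul, Matrix.transpose_mul, hAsym j, hZsymm j, hDsym, hYsym j] at h
  have hker0 : ∀ (j : Fin (k + 1)) (w : Fin (k + 1) → ℝ),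
      (M - Cmat k ylow j) *ᵥ w = 0 → w (Fin.last k) = 0 → w = 0 :=
    fun j w h1 h2 => ker_last_eq_zero hfeas h1 h2
  -- construction of the kernel vectors u j with Y j = μ j • u j u jᵀ
  have hu : ∀ j, ∃ uj : Fin (k + 1) → ℝ,
      (M - Cmat k ylow j) *ᵥ uj = 0 ∧ (Y j = 0 → uj = 0) ∧
        (Y j ≠ 0 → uj (Fin.last k) = 1) ∧
        Y j = Y j (Fin.last k) (Fin.last k) • Matrix.vecMulVec uj uj := by
    intro j
    by_cases hYj : Y j = 0
    · refine ⟨0, by simp, fun _ => rfl, fun h => absurd hYj h, ?_⟩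
      rw [hYj, vmv_zero_left]
      simp
    · have hex : ∃ a b, Y j a b ≠ 0 := by
        by_contra h
        push_neg at h
        exact hYj (by ext a b; simpa using h a b)
      obtain ⟨a, b, hab⟩ := hex
      have hya : (Y j *ᵥ Pi.single b 1) a ≠ 0 := by simpa using hab
      have hAy : (M - Cmat k ylow j) *ᵥ (Y j *ᵥ Pi.single b 1) = 0 := by
        rw [Matrix.mulVec_mulVec, hAY j, Matrix.zero_mulVec]
      have hyl : (Y j *ᵥ Pi.single b 1) (Fin.last k) ≠ 0 := by
        intro h
        have h2 := hker0 j _ hAy h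
        rw [h2] at hya
        exact hya rfl
      set y : Fin (k + 1) → ℝ := Y j *ᵥ Pi.single b 1 with hy
      refine ⟨(y (Fin.last k))⁻¹ • y, ?_, fun h => absurd h hYj, fun _ => ?_, ?_⟩
      · rw [Matrix.mulVec_smul, hAy, smul_zero]
      · simp [inv_mul_cancel₀ hyl]
      · set uj : Fin (k + 1) → ℝ := (y (Fin.last k))⁻¹ • y with hudef
        have hAu : (M - Cmat k ylow j) *ᵥ uj = 0 := by
          rw [hudef, Matrix.mulVec_smul, hAy, smul_zero]
        have hul : uj (Fin.last k) = 1 := by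
          simp [hudef, inv_mul_cancel₀ hyl]
        have hcol : ∀ c a', Y j a' c = Y j (Fin.last k) c * uj a' := by
          intro c a'
          have hAw : (M - Cmat k ylow j) *ᵥ (Y j *ᵥ Pi.single c 1) = 0 := by
            rw [Matrix.mulVec_mulVec, hAY j, Matrix.zero_mulVec]
          have h2 : uj (Fin.last k) • (Y j *ᵥ Pi.single c 1) -
              (Y j *ᵥ Pi.single c 1) (Fin.last k) • uj = 0 := by
            apply hker0 j
            · rw [Matrix.mulVec_sub, Matrix.mulVec_smul, Matrix.mulVec_smul, hAw, hAu,
                smul_zero, smul_zero, sub_zero]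
            · simp [hul, mul_comm]
          have h3 : (Y j *ᵥ Pi.single c 1) = (Y j *ᵥ Pi.single c 1) (Fin.last k) • uj := by
            have h4 := sub_eq_zero.mp h2
            rwa [hul, one_smul] at h4
          have h5 := congrFun h3 a'
          simpa using h5
        ext a' c
        have h1 := hcol c a'
        have h3 : Y j (Fin.last k) c = Y j c (Fin.last k) := by
          conv_lhs => rw [← hYsym j]
          rw [Matrix.transpose_apply]
        have h2 := hcol (Fin.last k) c
        simp only [Matrix.smul_apply, Matrix.vecMulVec_apply, smul_eq_mul]
        rw [h1, h3, h2]
        ring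
  choose u hu1 hu2 hu3 hu4 using hu
  have hμnonneg : ∀ j, 0 ≤ Y j (Fin.last k) (Fin.last k) := by
    intro j
    have h := psd_nonneg (hYpsd j) (Pi.single (Fin.last k) 1)
    simpa [dotProduct_single] using h
  have hspan : ∀ x : Fin (k + 1) → ℝ, x ∈ Submodule.span ℝ (Set.range u) := by
    have hdet : IsUnit Ω.det := isUnit_iff_ne_zero.mpr (ne_of_gt hΩ.det_pos)
    intro x
    have hx : x = Ω *ᵥ (Ω⁻¹ *ᵥ x) := by
      rw [Matrix.mulVec_mulVec, Matrix.mul_nonsing_inv _ hdet, Matrix.one_mulVec]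
    rw [hx, ← hYsum, sum_mulVec']
    refine Submodule.sum_mem _ fun j _ => ?_
    rw [hu4 j, Matrix.smul_mulVec, vmv_mulVec]
    exact Submodule.smul_mem _ _ (Submodule.smul_mem _ _ (Submodule.subset_span ⟨j, rfl⟩))
  have hLI : LinearIndependent ℝ u :=
    linearIndependent_of_top_le_span_of_card_eq_finrank (fun x _ => hspan x)
      (by simp)
  have hune : ∀ j, u j ≠ 0 := fun j => hLI.ne_zero j
  have hYne : ∀ j, Y j ≠ 0 := fun j h => hune j (hu2 j h)
  have hul : ∀ j, u j (Fin.last k) = 1 := fun j => hu3 j (hYne j)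
  have hμpos : ∀ j, 0 < Y j (Fin.last k) (Fin.last k) := by
    intro j
    rcases (hμnonneg j).lt_or_eq with h | h
    · exact h
    · exact absurd (by rw [hu4 j, ← h, zero_smul]) (hYne j)
  have hspos : ∀ j, 0 < u j ⬝ᵥ u j := fun j => dot_self_pos (hune j)
  have hker : ∀ (j : Fin (k + 1)) (w : Fin (k + 1) → ℝ), (M - Cmat k ylow j) *ᵥ w = 0 →
      w = w (Fin.last k) • u j := by
    intro j w hw
    have h2 : u j (Fin.last k) • w - w (Fin.last k) • u j = 0 := by
      apply hker0 j
      · rw [Matrix.mulVec_sub, Matrix.mulVec_smul, Matrix.mulVec_smul, hw, hu1 j, smul_zero,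
          smul_zero, sub_zero]
      · simp [hul j, mul_comm]
    have h3 := sub_eq_zero.mp h2
    rwa [hul j, one_smul] at h3
  -- the rank-two decomposition of Z j
  have hv : ∀ j, ∃ vj : Fin (k + 1) → ℝ,
      Y₁ j - Y₂ j = Matrix.vecMulVec (u j) vj + Matrix.vecMulVec vj (u j) ∧
        (M - Cmat k ylow j) *ᵥ vj =
          Y j (Fin.last k) (Fin.last k) • ((M₁ - M₂) *ᵥ u j) := by
    intro j
    set s : ℝ := u j ⬝ᵥ u j with hsdef
    have hs0 : s ≠ 0 := (hspos j).ne'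
    set p : Fin (k + 1) → ℝ := (Y₁ j - Y₂ j) *ᵥ u j with hpdef
    set c : ℝ := (u j ⬝ᵥ p) / (2 * s ^ 2) with hcdef
    set v : Fin (k + 1) → ℝ := s⁻¹ • p - c • u j with hvdef
    have hvu : v ⬝ᵥ u j = (u j ⬝ᵥ p) / (2 * s) := by
      rw [hvdef, sub_dotProduct, smul_dotProduct, smul_dotProduct,
        dotProduct_comm p (u j), ← hsdef, hcdef]
      field_simp
      linear_combination (-(u j ⬝ᵥ p) * (s * s⁻¹ - 1)) * mul_inv_cancel₀ hs0
    set W : Matrix (Fin (k + 1)) (Fin (k + 1)) ℝ :=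
      (Y₁ j - Y₂ j) - Matrix.vecMulVec (u j) v - Matrix.vecMulVec v (u j) with hWdef
    have hWsym : Wᵀ = W := by
      rw [hWdef, Matrix.transpose_sub, Matrix.transpose_sub, vmv_transpose, vmv_transpose,
        hZsymm j]
      abel
    have hWu : W *ᵥ u j = 0 := by
      rw [hWdef, Matrix.sub_mulVec, Matrix.sub_mulVec, vmv_mulVec, vmv_mulVec, ← hpdef,
        hvu, ← hsdef]
      rw [hvdef, smul_sub, smul_smul, smul_smul, mul_inv_cancel₀ hs0, one_smul]
      have hcs : s * c = u j ⬝ᵥ p / (2 * s) := by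
        rw [hcdef]
        field_simp
      rw [hcs]
      abel
    have hAW : (M - Cmat k ylow j) * W =
        (M₁ - M₂) * Y j - Matrix.vecMulVec ((M - Cmat k ylow j) *ᵥ v) (u j) := by
      rw [hWdef, Matrix.mul_sub, Matrix.mul_sub, hAZ j, mul_vmv, mul_vmv, hu1 j,
        vmv_zero_left, sub_zero]
    have hAWA : (M - Cmat k ylow j) * W * (M - Cmat k ylow j) = 0 := by
      rw [hAW, Matrix.sub_mul, Matrix.mul_assoc, hYM j, Matrix.mul_zero, vmv_mul,
        symm_vecMul (hAsym j), hu1 j, vmv_zero_right, sub_zero]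
    have hWA : ∀ x, W *ᵥ ((M - Cmat k ylow j) *ᵥ x) = 0 := by
      intro x
      set w : Fin (k + 1) → ℝ := W *ᵥ ((M - Cmat k ylow j) *ᵥ x) with hwdef
      have h1 : (M - Cmat k ylow j) *ᵥ w = 0 := by
        rw [hwdef, Matrix.mulVec_mulVec, Matrix.mulVec_mulVec, hAWA, Matrix.zero_mulVec]
      have h2 := hker j w h1
      have h3 : u j ⬝ᵥ w = 0 := by
        rw [hwdef, dotProduct_mulVec, symm_vecMul hWsym, hWu, zero_dotProduct]
      rw [h2, dotProduct_smul, smul_eq_mul] at h3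
      rcases mul_eq_zero.mp h3 with h | h
      · rw [h2, h, zero_smul]
      · exact absurd h (hspos j).ne'
    have hWAmat : W * (M - Cmat k ylow j) = 0 := by
      apply eq_of_forall_mulVec
      intro x
      rw [← Matrix.mulVec_mulVec, hWA x, Matrix.zero_mulVec]
    have hAWmat : (M - Cmat k ylow j) * W = 0 := by
      have h := congrArg Matrix.transpose hWAmat
      rwa [Matrix.transpose_mul, hAsym j, hWsym, Matrix.transpose_zero] at h
    have hW0 : W = 0 := by
      apply eq_of_forall_mulVec
      intro x
      rw [Matrix.zero_mulVec]
      set w : Fin (k + 1) → ℝ := W *ᵥ x with hwdef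
      have h1 : (M - Cmat k ylow j) *ᵥ w = 0 := by
        rw [hwdef, Matrix.mulVec_mulVec, hAWmat, Matrix.zero_mulVec]
      have h2 := hker j w h1
      have h3 : u j ⬝ᵥ w = 0 := by
        rw [hwdef, dotProduct_mulVec, symm_vecMul hWsym, hWu, zero_dotProduct]
      rw [h2, dotProduct_smul, smul_eq_mul] at h3
      rcases mul_eq_zero.mp h3 with h | h
      · rw [h2, h, zero_smul]
      · exact absurd h (hspos j).ne'
    have hZdec : Y₁ j - Y₂ j = Matrix.vecMulVec (u j) v + Matrix.vecMulVec v (u j) := by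
      have h := hW0
      rw [hWdef, sub_sub, sub_eq_zero] at h
      exact h
    have h1 : (Y₁ j - Y₂ j) * (M - Cmat k ylow j) =
        Matrix.vecMulVec (u j) ((M - Cmat k ylow j) *ᵥ v) := by
      rw [hZdec, Matrix.add_mul, vmv_mul, vmv_mul, symm_vecMul (hAsym j),
        symm_vecMul (hAsym j), hu1 j, vmv_zero_right, add_zero]
    have h2 : Y j * (M₁ - M₂) = Matrix.vecMulVec (u j)
        (Y j (Fin.last k) (Fin.last k) • ((M₁ - M₂) *ᵥ u j)) := by
      conv_lhs => rw [hu4 j]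
      rw [Matrix.smul_mul, vmv_mul, symm_vecMul hDsym, smul_vmv]
    have h3 : Matrix.vecMulVec (u j) ((M - Cmat k ylow j) *ᵥ v -
        Y j (Fin.last k) (Fin.last k) • ((M₁ - M₂) *ᵥ u j)) = 0 := by
      rw [vmv_sub, ← h1, ← h2, hZA j, sub_self]
    obtain ⟨a, ha⟩ := Function.ne_iff.mp (hune j)
    refine ⟨v, hZdec, ?_⟩
    funext b
    have h4 := congrFun (congrFun h3 a) b
    simp only [Matrix.vecMulVec_apply, Matrix.zero_apply] at h4
    have h5 := (mul_eq_zero.mp h4).resolve_left ha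
    simpa [sub_eq_zero] using h5
  choose v hv1 hv2 using hv
  -- trace argument
  have htr : ∀ j, ((Y₁ j - Y₂ j) * (M₁ - M₂)).trace =
      2 * (Y j (Fin.last k) (Fin.last k))⁻¹ * (v j ⬝ᵥ ((M - Cmat k ylow j) *ᵥ v j)) := by
    intro j
    have hDu : (M₁ - M₂) *ᵥ u j =
        (Y j (Fin.last k) (Fin.last k))⁻¹ • ((M - Cmat k ylow j) *ᵥ v j) := by
      rw [hv2 j, smul_smul, inv_mul_cancel₀ (hμpos j).ne', one_smul]
    rw [hv1 j, Matrix.add_mul, vmv_mul, vmv_mul, Matrix.trace_add, vmv_trace, vmv_trace,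
      symm_vecMul hDsym, symm_vecMul hDsym]
    have hcomm : u j ⬝ᵥ ((M₁ - M₂) *ᵥ v j) = v j ⬝ᵥ ((M₁ - M₂) *ᵥ u j) := by
      rw [dotProduct_mulVec, symm_vecMul hDsym, dotProduct_comm]
    rw [hcomm, hDu, dotProduct_smul, smul_eq_mul]
    ring
  have hsum0 : ∑ j, ((Y₁ j - Y₂ j) * (M₁ - M₂)).trace = 0 := by
    rw [← Matrix.trace_sum, ← Finset.sum_mul, hZsum, Matrix.zero_mul, Matrix.trace_zero]
  have hqle : ∀ j, v j ⬝ᵥ ((M - Cmat k ylow j) *ᵥ v j) ≤ 0 := by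
    intro j
    have h := psd_nonneg (hfeas j) (v j)
    rw [show Cmat k ylow j - M = -(M - Cmat k ylow j) from (neg_sub _ _).symm,
      Matrix.neg_mulVec, dotProduct_neg] at h
    linarith
  have hq0 : ∀ j, v j ⬝ᵥ ((M - Cmat k ylow j) *ᵥ v j) = 0 := by
    have hterm : ∀ j ∈ Finset.univ, ((Y₁ j - Y₂ j) * (M₁ - M₂)).trace ≤ 0 := by
      intro j _
      rw [htr j]
      have h1 := hqle j
      have h2 : (0:ℝ) ≤ 2 * (Y j (Fin.last k) (Fin.last k))⁻¹ :=
        mul_nonneg (by norm_num) (inv_nonneg.mpr (hμpos j).le)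
      nlinarith
    intro j
    have hz := (Finset.sum_eq_zero_iff_of_nonpos hterm).mp hsum0 j (Finset.mem_univ j)
    rw [htr j] at hz
    rcases mul_eq_zero.mp hz with h | h
    · exact absurd h (mul_ne_zero two_ne_zero (inv_ne_zero (hμpos j).ne'))
    · exact h
  have hAv0 : ∀ j, (M - Cmat k ylow j) *ᵥ v j = 0 := by
    intro j
    have hdot : v j ⬝ᵥ ((Cmat k ylow j - M) *ᵥ v j) = 0 := by
      rw [show Cmat k ylow j - M = -(M - Cmat k ylow j) from (neg_sub _ _).symm,
        Matrix.neg_mulVec, dotProduct_neg, hq0 j, neg_zero]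
    have h := psd_zero (hfeas j) hdot
    rw [show Cmat k ylow j - M = -(M - Cmat k ylow j) from (neg_sub _ _).symm,
      Matrix.neg_mulVec, neg_eq_zero] at h
    exact h
  have hDu0 : ∀ j, (M₁ - M₂) *ᵥ u j = 0 := by
    intro j
    have h := hv2 j
    rw [hAv0 j] at h
    exact ((smul_eq_zero.mp h.symm).resolve_left (hμpos j).ne')
  have hD0 : M₁ - M₂ = 0 := by
    have hDx : ∀ x, (M₁ - M₂) *ᵥ x = 0 := by
      intro x
      have hsub : Set.range u ⊆ (LinearMap.ker (M₁ - M₂).mulVecLin : Set (Fin (k + 1) → ℝ)) := by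
        rintro _ ⟨j, rfl⟩
        simpa [Matrix.mulVecLin_apply, Matrix.sub_mulVec] using hDu0 j
      have hle := Submodule.span_le.mpr hsub
      have hx := hle (hspan x)
      simpa [Matrix.mulVecLin_apply, Matrix.sub_mulVec] using hx
    apply eq_of_forall_mulVec
    intro x
    rw [hDx x, Matrix.zero_mulVec]
  refine ⟨sub_eq_zero.mp hD0, ?_⟩
  intro i
  have hvu : ∀ j, v j = v j (Fin.last k) • u j := fun j => hker j (v j) (hAv0 j)
  have hZj : ∀ j, Y₁ j - Y₂ j = (2 * v j (Fin.last k)) • Matrix.vecMulVec (u j) (u j) := by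
    intro j
    rw [hv1 j]
    conv_lhs => rw [hvu j]
    rw [vmv_smul_left, ← smul_vmv, ← add_smul, two_mul]
  have hsum2 : ∑ j, (2 * v j (Fin.last k)) • Matrix.vecMulVec (u j) (u j) = 0 := by
    calc ∑ j, (2 * v j (Fin.last k)) • Matrix.vecMulVec (u j) (u j)
        = ∑ j, (Y₁ j - Y₂ j) := Finset.sum_congr rfl fun j _ => (hZj j).symm
      _ = 0 := hZsum
  have happ := congrArg (fun X => X *ᵥ u i) hsum2
  simp only [Matrix.zero_mulVec] at happ
  rw [sum_mulVec'] at happ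
  have hterms : ∀ j ∈ Finset.univ, ((2 * v j (Fin.last k)) • Matrix.vecMulVec (u j) (u j)) *ᵥ u i
      = ((2 * v j (Fin.last k)) * (u j ⬝ᵥ u i)) • u j := by
    intro j _
    rw [Matrix.smul_mulVec, vmv_mulVec, smul_smul]
  rw [Finset.sum_congr rfl hterms] at happ
  have hcoef := Fintype.linearIndependent_iff.mp hLI
    (fun j => (2 * v j (Fin.last k)) * (u j ⬝ᵥ u i)) happ i
  have hvl0 : 2 * v i (Fin.last k) = 0 := by
    rcases mul_eq_zero.mp hcoef with h | h
    · exact h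
    · exact absurd h (hspos i).ne'
  have hZi := hZj i
  rw [hvl0, zero_smul] at hZi
  exact sub_eq_zero.mp hZi
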